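/- Let δ ∈ (0,1] and τ̄ > 0. There exists a constant C (depending on δ and τ̄) such that for every positive integer n and every integer m with 0 ≤ m ≤ √n, ∑_{k=1}^{n} k^{-(1+δ)/2} · (1 + (n - m - k τ̄)²/k)^{-1} ≤ C n^{-δ/2}. -/

import Mathlib

set_option maxHeartbeats 1000000

open Finset

lemma core_sum (B c : ℝ) (hB : 0 < B) (hc : 0 < c) (M : ℕ) :
    ∑ i ∈ range M, (B + c * (i:ℝ)^2)⁻¹ ≤ 1/B + 2/(Real.sqrt B * Real.sqrt c) := by
  have hs : 0 < Real.sqrt B := Real.sqrt_pos.2 hB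
  have ht : 0 < Real.sqrt c := Real.sqrt_pos.2 hc
  have hsB : Real.sqrt B ^ 2 = B := Real.sq_sqrt hB.le
  have htc : Real.sqrt c ^ 2 = c := Real.sq_sqrt hc.le
  set s := Real.sqrt B with hsd
  set t := Real.sqrt c with htd
  cases M with
  | zero => simp; positivity
  | succ M =>
    rw [Finset.sum_range_succ']
    have h0 : (B + c * ((0:ℕ):ℝ)^2)⁻¹ = 1/B := by norm_num
    rw [h0]
    have hF : ∑ i ∈ range M, (B + c * ((i+1:ℕ):ℝ)^2)⁻¹
        ≤ ∑ i ∈ range M, ((fun i : ℕ => -2/(t*(s + t*(i:ℝ)))) (i+1)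
            - (fun i : ℕ => -2/(t*(s + t*(i:ℝ)))) i) := by
      apply Finset.sum_le_sum
      intro i _
      simp only
      have hd1 : 0 < s + t*(i:ℝ) := by positivity
      have hd2 : 0 < s + t*((i:ℝ)+1) := by positivity
      have heq : (-2/(t*(s + t*(((i:ℕ)+1:ℕ):ℝ)))) - (-2/(t*(s + t*(i:ℝ))))
          = 2 / ((s + t*(i:ℝ)) * (s + t*((i:ℝ)+1))) := by
        push_cast
        field_simp
        ring
      push_cast
      rw [show ((i:ℝ)+1) = (((i:ℕ)+1:ℕ):ℝ) by push_cast; ring] at hd2 ⊢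
      rw [heq] at *
      push_cast at hd2 ⊢
      rw [inv_eq_one_div, div_le_div_iff₀ (by nlinarith) (by positivity)]
      nlinarith [sq_nonneg (s - t*((i:ℝ)+1)), mul_pos hs ht,
        mul_nonneg ht.le (Nat.cast_nonneg (α := ℝ) i), sq_nonneg (t*(i:ℝ)),
        mul_nonneg (mul_nonneg ht.le ht.le) (Nat.cast_nonneg (α := ℝ) i)]
    calc (∑ i ∈ range M, (B + c * ((i+1:ℕ):ℝ)^2)⁻¹) + 1/B
        ≤ (∑ i ∈ range M, ((fun i : ℕ => -2/(t*(s + t*(i:ℝ)))) (i+1)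
            - (fun i : ℕ => -2/(t*(s + t*(i:ℝ)))) i)) + 1/B := by linarith
      _ = (-2/(t*(s + t*(M:ℝ))) - (-2/(t*(s + t*((0:ℕ):ℝ))))) + 1/B := by
            rw [Finset.sum_range_sub (fun i : ℕ => -2/(t*(s + t*(i:ℝ))))]
      _ ≤ 1/B + 2/(s*t) := by
            have h1 : -2/(t*(s + t*(M:ℝ))) ≤ 0 :=
              div_nonpos_of_nonpos_of_nonneg (by norm_num) (by positivity)
            have h2 : -2/(t*(s + t*((0:ℕ):ℝ))) = -(2/(s*t)) := by
              push_cast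
              rw [mul_zero, add_zero, mul_comm t s]
              ring
            rw [h2]
            linarith

lemma loc_sum (B c κ : ℝ) (hB : 0 < B) (hc : 0 < c) (hκ : 0 ≤ κ) (n : ℕ) :
    ∑ k ∈ Finset.Icc 1 n, (B + c * (κ - (k:ℝ))^2)⁻¹
      ≤ 2/B + 4/(Real.sqrt B * Real.sqrt c) := by
  set k₀ := ⌈κ⌉₊ with hk0
  have hκk0 : κ ≤ (k₀:ℝ) := Nat.le_ceil κ
  rw [← Finset.sum_filter_add_sum_filter_not (Finset.Icc 1 n) (fun k => k < k₀)]
  have hupper : ∑ k ∈ (Finset.Icc 1 n).filter (fun k => ¬ k < k₀), (B + c*(κ-(k:ℝ))^2)⁻¹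
      ≤ 1/B + 2/(Real.sqrt B * Real.sqrt c) := by
    calc ∑ k ∈ (Finset.Icc 1 n).filter (fun k => ¬ k < k₀), (B + c*(κ-(k:ℝ))^2)⁻¹
        ≤ ∑ k ∈ (Finset.Icc 1 n).filter (fun k => ¬ k < k₀), (B + c*((k:ℝ)-(k₀:ℝ))^2)⁻¹ := by
          apply Finset.sum_le_sum
          intro k hk
          simp only [Finset.mem_filter, not_lt] at hk
          have h1 : (k₀:ℝ) ≤ (k:ℝ) := Nat.cast_le.2 hk.2
          apply inv_anti₀ (by positivity)
          have h2 : ((k:ℝ)-(k₀:ℝ))^2 ≤ (κ - (k:ℝ))^2 := by nlinarith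
          nlinarith [mul_le_mul_of_nonneg_left h2 hc.le]
      _ ≤ ∑ k ∈ Finset.Icc k₀ n, (B + c*((k:ℝ)-(k₀:ℝ))^2)⁻¹ := by
          apply Finset.sum_le_sum_of_subset_of_nonneg
          · intro k hk
            simp only [Finset.mem_filter, Finset.mem_Icc, not_lt] at *
            omega
          · intro k _ _; positivity
      _ = ∑ i ∈ range (n+1-k₀), (B + c*(i:ℝ)^2)⁻¹ := by
          rw [← Finset.Ico_add_one_right_eq_Icc, Finset.sum_Ico_eq_sum_range]
          apply Finset.sum_congr rfl
          intro i _
          push_cast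
          ring_nf
      _ ≤ 1/B + 2/(Real.sqrt B * Real.sqrt c) := core_sum B c hB hc _
  have hlower : ∑ k ∈ (Finset.Icc 1 n).filter (fun k => k < k₀), (B + c*(κ-(k:ℝ))^2)⁻¹
      ≤ 1/B + 2/(Real.sqrt B * Real.sqrt c) := by
    rcases Nat.eq_zero_or_pos k₀ with h0 | hpos
    · have hempty : (Finset.Icc 1 n).filter (fun k => k < k₀) = ∅ := by
        apply Finset.filter_false_of_mem
        intro k _
        rw [h0]
        exact Nat.not_lt_zero k
      rw [hempty, Finset.sum_empty]
      positivity
    · set K := k₀ - 1 with hKd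
      have hKc : (K:ℝ) = (k₀:ℝ) - 1 := by
        rw [hKd, Nat.cast_sub hpos]; norm_num
      have hKκ : (K:ℝ) ≤ κ := by
        have := Nat.ceil_lt_add_one hκ
        rw [hKc]; linarith
      calc ∑ k ∈ (Finset.Icc 1 n).filter (fun k => k < k₀), (B + c*(κ-(k:ℝ))^2)⁻¹
          ≤ ∑ k ∈ (Finset.Icc 1 n).filter (fun k => k < k₀), (B + c*((K:ℝ)-(k:ℝ))^2)⁻¹ := by
            apply Finset.sum_le_sum
            intro k hk
            simp only [Finset.mem_filter, Finset.mem_Icc] at hk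
            have h1 : (k:ℝ) ≤ (K:ℝ) := Nat.cast_le.2 (by omega)
            apply inv_anti₀ (by positivity)
            have h2 : ((K:ℝ)-(k:ℝ))^2 ≤ (κ - (k:ℝ))^2 := by nlinarith
            nlinarith [mul_le_mul_of_nonneg_left h2 hc.le]
        _ ≤ ∑ k ∈ Finset.Icc 1 K, (B + c*((K:ℝ)-(k:ℝ))^2)⁻¹ := by
            apply Finset.sum_le_sum_of_subset_of_nonneg
            · intro k hk
              simp only [Finset.mem_filter, Finset.mem_Icc] at *
              omega
            · intro k _ _; positivity
        _ = ∑ i ∈ range K, (B + c*(i:ℝ)^2)⁻¹ := by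
            rw [← Finset.Ico_add_one_right_eq_Icc, Finset.sum_Ico_eq_sum_range]
            rw [show K + 1 - 1 = K from rfl]
            rw [← Finset.sum_range_reflect (fun i : ℕ => (B + c*(i:ℝ)^2)⁻¹) K]
            apply Finset.sum_congr rfl
            intro i hi
            simp only [Finset.mem_range] at hi
            have h1 : 1 + i ≤ K := by omega
            have h2 : ((K - 1 - i : ℕ):ℝ) = (K:ℝ) - ((1+i : ℕ):ℝ) := by
              rw [show K - 1 - i = K - (1+i) from by omega, Nat.cast_sub h1]
            beta_reduce
            rw [h2]
        _ ≤ 1/B + 2/(Real.sqrt B * Real.sqrt c) := core_sum B c hB hc _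
  have hsplit : 2/B + 4/(Real.sqrt B * Real.sqrt c)
      = (1/B + 2/(Real.sqrt B * Real.sqrt c)) + (1/B + 2/(Real.sqrt B * Real.sqrt c)) := by
    ring
  rw [hsplit]
  exact add_le_add hlower hupper

theorem sum_semilocal_bound (δ τbar : ℝ) (hδ : δ ∈ Set.Ioc (0:ℝ) 1) (hτ : 0 < τbar) :
    ∃ C : ℝ, 0 < C ∧ ∀ n : ℕ, 0 < n → ∀ m : ℕ, (m : ℝ) ≤ Real.sqrt n →
      ∑ k ∈ Finset.Icc 1 n,
          (k : ℝ) ^ (-(1 + δ) / 2) * (1 + ((n : ℝ) - m - k * τbar) ^ 2 / k)⁻¹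
        ≤ C * (n : ℝ) ^ (-δ / 2) := by
  obtain ⟨hδ0, hδ1⟩ := hδ
  have hst : 0 < Real.sqrt τbar := Real.sqrt_pos.2 hτ
  have hstsq : Real.sqrt τbar ^ 2 = τbar := Real.sq_sqrt hτ.le
  refine ⟨22 + 8*τbar + 8/Real.sqrt τbar, by positivity, ?_⟩
  intro n hn m hm
  have hn1 : (1:ℝ) ≤ (n:ℝ) := by exact_mod_cast hn
  have hC6 : (6:ℝ) ≤ 22 + 8*τbar + 8/Real.sqrt τbar := by
    have h1 : (0:ℝ) ≤ 8*τbar + 8/Real.sqrt τbar := by positivity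
    linarith
  have hsnpos : 0 < Real.sqrt n := Real.sqrt_pos.2 (by positivity)
  have hsq : Real.sqrt (n:ℝ) ^ 2 = (n:ℝ) := Real.sq_sqrt (by positivity)
  by_cases hn4 : 4 ≤ n
  · -- main case
    have hn4' : (4:ℝ) ≤ (n:ℝ) := by exact_mod_cast hn4
    have hsn : Real.sqrt n ≤ (n:ℝ)/2 := by
      have h2 : (2:ℝ) ≤ Real.sqrt n := by
        rw [show (2:ℝ) = Real.sqrt 4 by
          rw [show (4:ℝ) = 2^2 by norm_num, Real.sqrt_sq (by norm_num)]]
        exact Real.sqrt_le_sqrt hn4'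
      nlinarith
    obtain ⟨a, had⟩ : ∃ x : ℝ, x = (n:ℝ) - (m:ℝ) := ⟨_, rfl⟩
    have ha : (n:ℝ)/2 ≤ a := by
      have h1 : (m:ℝ) ≤ (n:ℝ)/2 := hm.trans hsn
      rw [had]; linarith
    have ha0 : 0 < a := by linarith
    obtain ⟨B, hBd⟩ : ∃ x : ℝ, x = a/(2*τbar) := ⟨_, rfl⟩
    obtain ⟨c, hcd⟩ : ∃ x : ℝ, x = τbar^2 := ⟨_, rfl⟩
    obtain ⟨κ, hκd⟩ : ∃ x : ℝ, x = a/τbar := ⟨_, rfl⟩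
    have hB : 0 < B := by rw [hBd]; positivity
    have hc : 0 < c := by rw [hcd]; positivity
    have hκ : 0 ≤ κ := by rw [hκd]; positivity
    have hqc : ∀ x : ℝ, c * (κ - x)^2 = (a - x*τbar)^2 := by
      intro x
      rw [hcd, hκd]
      field_simp
    have hBa : 2*τbar*B = a := by rw [hBd]; field_simp
    have hsc : Real.sqrt c = τbar := by rw [hcd]; exact Real.sqrt_sq hτ.le
    have hsub : (n:ℝ) - (m:ℝ) = a := had.symm
    clear hBd hcd hκd had
    have hexp : 0 ≤ (1-δ)/2 := by linarith
    have hterm : ∀ k ∈ Finset.Icc 1 n,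
        (k : ℝ) ^ (-(1 + δ) / 2) * (1 + ((n : ℝ) - m - k * τbar) ^ 2 / k)⁻¹
          ≤ (n:ℝ)^((1-δ)/2) * ((B + c * (κ - (k:ℝ))^2)⁻¹ + 4/a^2) := by
      intro k hk
      simp only [Finset.mem_Icc] at hk
      have hk1 : (1:ℝ) ≤ (k:ℝ) := by exact_mod_cast hk.1
      have hk0 : (0:ℝ) < (k:ℝ) := by linarith
      have hkn : (k:ℝ) ≤ (n:ℝ) := by exact_mod_cast hk.2
      have hq : (n:ℝ) - m - k*τbar = a - k*τbar := by rw [← hsub]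
      rw [hq]
      have e1 : (k:ℝ) ^ (-(1 + δ) / 2) = (k:ℝ)^((1-δ)/2) * (k:ℝ)⁻¹ := by
        rw [← Real.rpow_neg_one (k:ℝ), ← Real.rpow_add hk0]
        congr 1
        ring
      have e2 : (k:ℝ)⁻¹ * (1 + (a - k*τbar)^2/(k:ℝ))⁻¹ = ((k:ℝ) + (a - k*τbar)^2)⁻¹ := by
        rw [← mul_inv]
        congr 1
        field_simp
      rw [e1, mul_assoc, e2]
      have hbase : (k:ℝ)^((1-δ)/2) ≤ (n:ℝ)^((1-δ)/2) :=
        Real.rpow_le_rpow hk0.le hkn hexp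
      have hden : (0:ℝ) < (k:ℝ) + (a - k*τbar)^2 := by positivity
      have hBc : (0:ℝ) < B + c * (κ - (k:ℝ))^2 := by
        have : (0:ℝ) ≤ c * (κ - (k:ℝ))^2 := by positivity
        linarith
      have hinv : ((k:ℝ) + (a - k*τbar)^2)⁻¹ ≤ (B + c * (κ - (k:ℝ))^2)⁻¹ + 4/a^2 := by
        by_cases hcase : a/2 ≤ (k:ℝ)*τbar
        · have hkB : B ≤ (k:ℝ) := by nlinarith
          have h1 : (B + c * (κ - (k:ℝ))^2) ≤ (k:ℝ) + (a - k*τbar)^2 := by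
            rw [hqc]; linarith
          have h2 : ((k:ℝ) + (a - k*τbar)^2)⁻¹ ≤ (B + c * (κ - (k:ℝ))^2)⁻¹ :=
            inv_anti₀ hBc h1
          have h3 : (0:ℝ) ≤ 4/a^2 := by positivity
          linarith
        · push_neg at hcase
          have hq2 : a^2/4 ≤ (a - k*τbar)^2 := by nlinarith
          have h1 : ((k:ℝ) + (a - k*τbar)^2)⁻¹ ≤ 4/a^2 := by
            rw [inv_eq_one_div, div_le_div_iff₀ hden (by positivity)]
            nlinarith
          have h2 : (0:ℝ) ≤ (B + c * (κ - (k:ℝ))^2)⁻¹ := by positivity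
          linarith
      have hnn : (0:ℝ) ≤ ((k:ℝ) + (a - k*τbar)^2)⁻¹ := by positivity
      exact mul_le_mul hbase hinv hnn (by positivity)
    have hinner : (2/B + 4/(Real.sqrt B * Real.sqrt c)) + (n:ℝ) * (4/a^2)
        ≤ (22 + 8*τbar + 8/Real.sqrt τbar) / Real.sqrt n := by
      have hsnn : Real.sqrt n ≤ (n:ℝ) := by nlinarith
      have hsB : 0 < Real.sqrt B := Real.sqrt_pos.2 hB
      have b1 : 2/B ≤ 8*τbar/Real.sqrt n := by
        rw [div_le_div_iff₀ hB hsnpos]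
        nlinarith
      have hBl : Real.sqrt n / (2 * Real.sqrt τbar) ≤ Real.sqrt B := by
        rw [Real.le_sqrt (by positivity) hB.le]
        rw [div_pow, mul_pow, hsq, hstsq]
        rw [div_le_iff₀ (by positivity)]
        nlinarith
      have h5 : Real.sqrt n ≤ 2*Real.sqrt τbar*Real.sqrt B := by
        rw [div_le_iff₀ (by positivity)] at hBl
        linarith
      have b2 : 4/(Real.sqrt B * Real.sqrt c) ≤ (8/Real.sqrt τbar)/Real.sqrt n := by
        rw [hsc, div_le_div_iff₀ (by positivity) hsnpos, div_mul_eq_mul_div,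
          le_div_iff₀ hst]
        nlinarith [mul_le_mul_of_nonneg_right h5 hst.le, mul_pos hsB hst]
      have b3 : (n:ℝ) * (4/a^2) ≤ 16/Real.sqrt n := by
        rw [mul_div_assoc', div_le_div_iff₀ (by positivity) hsnpos]
        nlinarith [sq_nonneg (a - (n:ℝ)/2),
          mul_le_mul_of_nonneg_left hsnn (by positivity : (0:ℝ) ≤ 4*(n:ℝ))]
      calc (2/B + 4/(Real.sqrt B * Real.sqrt c)) + (n:ℝ) * (4/a^2)
          ≤ 8*τbar/Real.sqrt n + (8/Real.sqrt τbar)/Real.sqrt n + 16/Real.sqrt n := by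
            linarith
        _ = (8*τbar + 8/Real.sqrt τbar + 16)/Real.sqrt n := by ring
        _ ≤ (22 + 8*τbar + 8/Real.sqrt τbar) / Real.sqrt n := by
            apply div_le_div_of_nonneg_right ?_ hsnpos.le
            linarith
    calc ∑ k ∈ Finset.Icc 1 n,
          (k : ℝ) ^ (-(1 + δ) / 2) * (1 + ((n : ℝ) - m - k * τbar) ^ 2 / k)⁻¹
        ≤ ∑ k ∈ Finset.Icc 1 n, (n:ℝ)^((1-δ)/2) * ((B + c * (κ - (k:ℝ))^2)⁻¹ + 4/a^2) :=
          Finset.sum_le_sum hterm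
      _ = (n:ℝ)^((1-δ)/2) * ((∑ k ∈ Finset.Icc 1 n, (B + c * (κ - (k:ℝ))^2)⁻¹) + (n:ℝ) * (4/a^2)) := by
          rw [← Finset.mul_sum, Finset.sum_add_distrib, Finset.sum_const, Nat.card_Icc]
          simp only [Nat.add_sub_cancel, nsmul_eq_mul]
      _ ≤ (n:ℝ)^((1-δ)/2) * ((2/B + 4/(Real.sqrt B * Real.sqrt c)) + (n:ℝ) * (4/a^2)) := by
          apply mul_le_mul_of_nonneg_left _ (by positivity)
          have h := loc_sum B c κ hB hc hκ n
          linarith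
      _ ≤ (n:ℝ)^((1-δ)/2) * ((22 + 8*τbar + 8/Real.sqrt τbar) / Real.sqrt n) :=
          mul_le_mul_of_nonneg_left hinner (by positivity)
      _ = (22 + 8*τbar + 8/Real.sqrt τbar) * (n : ℝ) ^ (-δ / 2) := by
          have hpow : (n:ℝ)^((1-δ)/2) * (Real.sqrt n)⁻¹ = (n:ℝ)^(-δ/2) := by
            rw [Real.sqrt_eq_rpow, ← Real.rpow_neg (by positivity),
              ← Real.rpow_add (by positivity : (0:ℝ) < (n:ℝ))]
            congr 1
            ring
          have hre : (n:ℝ)^((1-δ)/2) * ((22 + 8*τbar + 8/Real.sqrt τbar) / Real.sqrt n)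
              = (22 + 8*τbar + 8/Real.sqrt τbar) * ((n:ℝ)^((1-δ)/2) * (Real.sqrt n)⁻¹) := by
            ring
          rw [hre, hpow]
  · -- small n
    push_neg at hn4
    have hn3 : (n:ℝ) ≤ 3 := by exact_mod_cast Nat.lt_succ_iff.mp hn4
    have hterm1 : ∀ k ∈ Finset.Icc 1 n,
        (k : ℝ) ^ (-(1 + δ) / 2) * (1 + ((n : ℝ) - m - k * τbar) ^ 2 / k)⁻¹ ≤ 1 := by
      intro k hk
      simp only [Finset.mem_Icc] at hk
      have hk1 : (1:ℝ) ≤ (k:ℝ) := by exact_mod_cast hk.1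
      have hk0 : (0:ℝ) < (k:ℝ) := by linarith
      have h1 : (k:ℝ) ^ (-(1 + δ) / 2) ≤ 1 :=
        Real.rpow_le_one_of_one_le_of_nonpos hk1 (by linarith)
      have h2 : (1 + ((n : ℝ) - m - k * τbar) ^ 2 / k)⁻¹ ≤ 1 := by
        have : (0:ℝ) ≤ ((n : ℝ) - m - k * τbar) ^ 2 / k := by positivity
        rw [inv_le_one_iff₀]
        right; linarith
      have h3 : (0:ℝ) ≤ (k:ℝ) ^ (-(1 + δ) / 2) := Real.rpow_nonneg hk0.le _
      calc (k : ℝ) ^ (-(1 + δ) / 2) * (1 + ((n : ℝ) - m - k * τbar) ^ 2 / k)⁻¹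
          ≤ 1 * 1 := mul_le_mul h1 h2 (by positivity) (by norm_num)
        _ = 1 := by norm_num
    have hsum : ∑ k ∈ Finset.Icc 1 n,
        (k : ℝ) ^ (-(1 + δ) / 2) * (1 + ((n : ℝ) - m - k * τbar) ^ 2 / k)⁻¹ ≤ (n:ℝ) := by
      calc ∑ k ∈ Finset.Icc 1 n,
          (k : ℝ) ^ (-(1 + δ) / 2) * (1 + ((n : ℝ) - m - k * τbar) ^ 2 / k)⁻¹
          ≤ ∑ k ∈ Finset.Icc 1 n, (1:ℝ) := Finset.sum_le_sum hterm1
        _ = (n:ℝ) := by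
            rw [Finset.sum_const, Nat.card_Icc]
            simp
    have hps : 0 < (n:ℝ)^(δ/2) := Real.rpow_pos_of_pos (by positivity) _
    have hhalf : (1:ℝ)/2 ≤ (n:ℝ)^(-δ/2) := by
      have h1 : (n:ℝ)^(δ/2) ≤ (n:ℝ)^((1:ℝ)/2) :=
        Real.rpow_le_rpow_of_exponent_le hn1 (by linarith)
      have h2 : (n:ℝ)^((1:ℝ)/2) = Real.sqrt n := (Real.sqrt_eq_rpow _).symm
      have h3 : Real.sqrt n ≤ 2 := by
        rw [show (2:ℝ) = Real.sqrt 4 by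
          rw [show (4:ℝ) = 2^2 by norm_num, Real.sqrt_sq (by norm_num)]]
        apply Real.sqrt_le_sqrt
        linarith
      have h4 : (n:ℝ)^(δ/2) ≤ 2 := by rw [h2] at h1; linarith
      rw [show -δ/2 = -(δ/2) by ring, Real.rpow_neg (by positivity)]
      calc (1:ℝ)/2 ≤ 1/(n:ℝ)^(δ/2) := by
            apply one_div_le_one_div_of_le hps h4
        _ = ((n:ℝ)^(δ/2))⁻¹ := one_div _
    calc ∑ k ∈ Finset.Icc 1 n,
        (k : ℝ) ^ (-(1 + δ) / 2) * (1 + ((n : ℝ) - m - k * τbar) ^ 2 / k)⁻¹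
        ≤ (n:ℝ) := hsum
      _ ≤ 3 := hn3
      _ ≤ (22 + 8*τbar + 8/Real.sqrt τbar) * (n : ℝ) ^ (-δ / 2) := by
          have := mul_le_mul hC6 hhalf (by norm_num) (by linarith)
          linarith
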